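/- Let G be a Polish group. Then G admits a compatible two-sided invariant metric (i.e., G is TSI) if and only if for all sequences (g_p) and (g'_p) in G, the sequence (g_p·g'_p) converges to the identity if and only if (g'_p·g_p) converges to the identity. -/

import Mathlib

open Filter Topology
open Uniformity

private lemma min1_triangle {a b c : ℝ} (hb : 0 ≤ b) (hc : 0 ≤ c) (h : a ≤ b + c) :
    min a 1 ≤ min b 1 + min c 1 := by
  rcases le_total 1 b with h1 | h1
  · rw [min_eq_right h1]
    have : (0:ℝ) ≤ min c 1 := le_min hc zero_le_one
    linarith [min_le_right a 1]
  rcases le_total 1 c with h2 | h2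
  · rw [min_eq_right h2]
    have : (0:ℝ) ≤ min b 1 := le_min hb zero_le_one
    linarith [min_le_right a 1]
  rw [min_eq_left h1, min_eq_left h2]
  exact le_trans (min_le_left a 1) h

/-- A Polish group is TSI if it admits a compatible two-sided invariant metric. -/
def IsTSI (G : Type*) [Group G] [t : TopologicalSpace G] : Prop :=
  ∃ m : MetricSpace G, m.toUniformSpace.toTopologicalSpace = t ∧
    (∀ g h k : G, @dist G m.toDist (g * h) (g * k) = @dist G m.toDist h k) ∧
    (∀ g h k : G, @dist G m.toDist (h * g) (k * g) = @dist G m.toDist h k)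


/-- SIN: every neighborhood of 1 contains a conjugation-invariant neighborhood. -/
private lemma sin_of_cond {G : Type*} [Group G] [TopologicalSpace G] [IsTopologicalGroup G]
    [FirstCountableTopology G]
    (H : ∀ g g' : ℕ → G,
        Tendsto (fun p => g p * g' p) atTop (𝓝 1) ↔
          Tendsto (fun p => g' p * g p) atTop (𝓝 1))
    {U : Set G} (hU : U ∈ 𝓝 (1 : G)) :
    ∃ V ∈ 𝓝 (1 : G), ∀ g : G, ∀ v ∈ V, g * v * g⁻¹ ∈ U := by
  by_contra hcon
  push_neg at hcon
  obtain ⟨B, hB⟩ := (𝓝 (1 : G)).exists_antitone_basis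
  choose k v hv hvU using fun n => hcon (B n) (hB.mem n)
  have hv1 : Tendsto v atTop (𝓝 (1 : G)) := hB.tendsto hv
  have h2 : Tendsto (fun p => (k p)⁻¹ * (k p * v p)) atTop (𝓝 (1 : G)) := by
    simpa [← mul_assoc] using hv1
  have h3 : Tendsto (fun p => (k p * v p) * (k p)⁻¹) atTop (𝓝 (1 : G)) :=
    (H (fun p => k p * v p) fun p => (k p)⁻¹).2 h2
  obtain ⟨n, hn⟩ := (h3.eventually_mem hU).exists
  exact hvU n hn

private lemma isTSI_of_cond {G : Type*} [Group G] [TopologicalSpace G] [IsTopologicalGroup G]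
    [PolishSpace G]
    (H : ∀ g g' : ℕ → G,
        Tendsto (fun p => g p * g' p) atTop (𝓝 1) ↔
          Tendsto (fun p => g' p * g p) atTop (𝓝 1)) :
    IsTSI G := by
  letI U : UniformSpace G := IsTopologicalGroup.rightUniformSpace G
  haveI hcg : (𝓤 G).IsCountablyGenerated := by
    rw [uniformity_eq_comap_nhds_one']
    exact Filter.comap.isCountablyGenerated _ _
  letI m₀ : PseudoMetricSpace G := UniformSpace.pseudoMetricSpace G
  have hUU : m₀.toUniformSpace = U := rfl
  set S : G → G → Set ℝ := fun x y =>
    Set.range (fun gh : G × G => min (dist (gh.1 * x * gh.2) (gh.1 * y * gh.2)) 1) with hS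
  have hne : ∀ x y : G, (S x y).Nonempty := fun x y => Set.range_nonempty _
  have hbdd : ∀ x y : G, BddAbove (S x y) := fun x y =>
    ⟨1, by rintro r ⟨gh, rfl⟩; exact min_le_right _ _⟩
  have hmem : ∀ (x y g h : G), min (dist (g * x * h) (g * y * h)) 1 ∈ S x y :=
    fun x y g h => ⟨(g, h), rfl⟩
  set D : G → G → ℝ := fun x y => sSup (S x y) with hD
  have hDle : ∀ x y g h : G, min (dist (g * x * h) (g * y * h)) 1 ≤ D x y :=
    fun x y g h => le_csSup (hbdd x y) (hmem x y g h)
  have hminD : ∀ x y : G, min (dist x y) 1 ≤ D x y := by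
    intro x y
    have := hDle x y 1 1
    simpa using this
  have hDnonneg : ∀ x y : G, 0 ≤ D x y := fun x y =>
    le_trans (le_min dist_nonneg zero_le_one) (hminD x y)
  have hDself : ∀ x : G, D x x = 0 := by
    intro x
    refine le_antisymm ?_ (hDnonneg x x)
    apply csSup_le (hne x x)
    rintro r ⟨gh, rfl⟩
    simp
  have hDcomm : ∀ x y : G, D x y = D y x := by
    intro x y
    have hfun : (fun gh : G × G => min (dist (gh.1 * x * gh.2) (gh.1 * y * gh.2)) 1)
        = fun gh : G × G => min (dist (gh.1 * y * gh.2) (gh.1 * x * gh.2)) 1 := by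
      funext gh; rw [dist_comm]
    simp only [hD, hS, hfun]
  have hDtri : ∀ x y z : G, D x z ≤ D x y + D y z := by
    intro x y z
    apply csSup_le (hne x z)
    rintro r ⟨⟨g, h⟩, rfl⟩
    exact le_trans (min1_triangle dist_nonneg dist_nonneg (dist_triangle _ (g * y * h) _))
      (add_le_add (hDle x y g h) (hDle y z g h))
  have hDeq : ∀ x y : G, D x y = 0 → x = y := by
    intro x y h0
    have h1 : min (dist x y) 1 ≤ 0 := h0 ▸ hminD x y
    have h2 : dist x y = 0 := by
      rcases le_total (dist x y) 1 with h | h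
      · rw [min_eq_left h] at h1
        exact le_antisymm h1 dist_nonneg
      · rw [min_eq_right h] at h1; linarith
    have h3 : ∀ W ∈ 𝓝 (1 : G), y * x⁻¹ ∈ W := by
      intro W hW
      have hent : (fun p : G × G => p.2 / p.1) ⁻¹' W ∈ 𝓤 G := by
        simp only [div_eq_mul_inv]; exact preimage_mem_comap hW
      rcases Metric.mem_uniformity_dist.1 hent with ⟨ε, hε, hεsub⟩
      have hxy : (x, y) ∈ (fun p : G × G => p.2 / p.1) ⁻¹' W := hεsub (by rw [h2]; exact hε)
      simpa [div_eq_mul_inv] using hxy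
    by_contra hxy
    have hne1 : (1 : G) ≠ y * x⁻¹ := by
      intro h
      exact hxy (mul_inv_eq_one.1 h.symm).symm
    have := h3 _ (compl_singleton_mem_nhds hne1)
    simp at this
  have hopen : ∀ s : Set G, IsOpen s ↔ ∀ x ∈ s, ∃ ε > 0, ∀ y, D x y < ε → y ∈ s := by
    intro s
    constructor
    · intro hs x hx
      obtain ⟨ε, hε, hball⟩ := Metric.mem_nhds_iff.1 (hs.mem_nhds hx)
      refine ⟨min ε 1, lt_min hε one_pos, fun y hy => ?_⟩
      have h1 : min (dist x y) 1 < min ε 1 := lt_of_le_of_lt (hminD x y) hy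
      have hlt1 : min (dist x y) 1 < 1 := lt_of_lt_of_le h1 (min_le_right _ _)
      have hd1 : dist x y < 1 := by
        rcases lt_or_ge (dist x y) 1 with h | h
        · exact h
        · rw [min_eq_right h] at hlt1; linarith
      rw [min_eq_left hd1.le] at h1
      exact hball (Metric.mem_ball'.2 (lt_of_lt_of_le h1 (min_le_left _ _)))
    · intro hs
      rw [isOpen_iff_mem_nhds]
      intro x hx
      obtain ⟨ε, hε, hball⟩ := hs x hx
      have hu : {p : G × G | dist p.1 p.2 < ε / 2} ∈ 𝓤 G :=
        Metric.dist_mem_uniformity (by linarith)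
      obtain ⟨W, hW, hWsub⟩ := Filter.mem_comap.1 hu
      obtain ⟨V, hV, hVinv⟩ := sin_of_cond H hW
      have hcont : Continuous fun y : G => y * x⁻¹ := continuous_mul_right x⁻¹
      have hN : (fun y : G => y * x⁻¹) ⁻¹' V ∈ 𝓝 x := by
        apply hcont.continuousAt.preimage_mem_nhds
        simpa using hV
      filter_upwards [hN] with y hy
      refine hball y ?_
      have hDy : D x y ≤ ε / 2 := by
        apply csSup_le (hne x y)
        rintro r ⟨⟨g, h⟩, rfl⟩
        have hmem2 : g * (y * x⁻¹) * g⁻¹ ∈ W := hVinv g _ hy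
        have hpair : (g * x * h, g * y * h) ∈ (fun p : G × G => p.2 / p.1) ⁻¹' W := by
          show (g * y * h) / (g * x * h) ∈ W
          have heq : (g * y * h) / (g * x * h) = g * (y * x⁻¹) * g⁻¹ := by simp [div_eq_mul_inv, mul_assoc]
          rw [heq]; exact hmem2
        exact le_trans (min_le_left _ _) (le_of_lt (hWsub (show (g * x * h, g * y * h) ∈ (fun p : G × G => p.2 * p.1⁻¹) ⁻¹' W by
          simpa only [Set.mem_preimage, div_eq_mul_inv] using hpair)))
      linarith
  have hSl : ∀ g x y : G, S (g * x) (g * y) = S x y := by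
    intro g x y
    ext r
    constructor
    · rintro ⟨⟨a, b⟩, rfl⟩
      exact ⟨(a * g, b), by simp [mul_assoc]⟩
    · rintro ⟨⟨a, b⟩, rfl⟩
      exact ⟨(a * g⁻¹, b), by simp [mul_assoc]⟩
  have hSr : ∀ g x y : G, S (x * g) (y * g) = S x y := by
    intro g x y
    ext r
    constructor
    · rintro ⟨⟨a, b⟩, rfl⟩
      exact ⟨(a, g * b), by simp [mul_assoc]⟩
    · rintro ⟨⟨a, b⟩, rfl⟩
      exact ⟨(a, g⁻¹ * b), by simp [mul_assoc]⟩
  refine ⟨MetricSpace.ofDistTopology D hDself hDcomm hDtri hopen hDeq, rfl, ?_, ?_⟩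
  · intro g x y
    show D (g * x) (g * y) = D x y
    simp only [hD, hSl]
  · intro g x y
    show D (x * g) (y * g) = D x y
    simp only [hD, hSr]

/-- A Polish group `G` is TSI iff for all sequences `(g_p)`, `(g'_p)` in `G`,
`g_p * g'_p → 1` iff `g'_p * g_p → 1`. -/
theorem stmt_0 (G : Type*) [Group G] [TopologicalSpace G] [IsTopologicalGroup G]
    [PolishSpace G] :
    IsTSI G ↔
      ∀ g g' : ℕ → G,
        Tendsto (fun p => g p * g' p) atTop (𝓝 1) ↔
          Tendsto (fun p => g' p * g p) atTop (𝓝 1) := by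
  constructor
  · rintro ⟨m, hm, hl, hr⟩ g g'
    have key : ∀ x y : G, @dist G m.toDist (x * y) 1 = @dist G m.toDist (y * x) 1 := by
      intro x y
      have h1 := hr x (x * y) 1
      have h2 := hl x (y * x) 1
      rw [mul_assoc, one_mul] at h1
      rw [mul_one] at h2
      rw [← h1, ← h2]
    have ht : ∀ f : ℕ → G, Tendsto f atTop (𝓝 (1 : G)) ↔
        Tendsto (fun p => @dist G m.toDist (f p) 1) atTop (𝓝 (0 : ℝ)) := by
      intro f
      rw [← hm]
      exact @tendsto_iff_dist_tendsto_zero G ℕ m.toPseudoMetricSpace f atTop 1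
    rw [ht, ht]
    exact tendsto_congr fun p => key (g p) (g' p)
  · exact isTSI_of_cond
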